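/- For any 2-admissible restriction graph G on [n] (i.e., |P(G)| ≥ 2), there exist two permutations σ, ρ ∈ P(G) whose ℓ∞-distance equals max_{1 ≤ i ≤ n} (n − |R(i)| − |R⁻¹(i)| − 1). -/

import Mathlib

section Aux

variable {n : ℕ}

/-- The value of a permutation at `i` equals the number of elements mapped below. -/
lemma perm_below_ncard (σ : Equiv.Perm (Fin n)) (i : Fin n) :
    {u : Fin n | σ u < σ i}.ncard = (σ i : ℕ) := by
  have h : {u : Fin n | σ u < σ i} = σ.symm '' (Set.Iio (σ i)) := by
    ext u
    constructor
    · intro hu; exact ⟨σ u, hu, σ.symm_apply_apply u⟩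
    · rintro ⟨k, hk, rfl⟩; simpa using hk
  rw [h, Set.ncard_image_of_injective _ σ.symm.injective, ← Finset.coe_Iio,
    Set.ncard_coe_finset, Fin.card_Iio]

lemma perm_above_ncard (σ : Equiv.Perm (Fin n)) (i : Fin n) :
    {u : Fin n | σ i < σ u}.ncard = n - 1 - (σ i : ℕ) := by
  have h : {u : Fin n | σ i < σ u} = σ.symm '' (Set.Ioi (σ i)) := by
    ext u
    constructor
    · intro hu; exact ⟨σ u, hu, σ.symm_apply_apply u⟩
    · rintro ⟨k, hk, rfl⟩; simpa using hk
  rw [h, Set.ncard_image_of_injective _ σ.symm.injective, ← Finset.coe_Ioi,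
    Set.ncard_coe_finset, Fin.card_Ioi]

/-- Any partial order on `Fin n` has a linear extension realized by a permutation. -/
lemma exists_perm_ext (q : Fin n → Fin n → Prop) (hq : IsPartialOrder (Fin n) q) :
    ∃ σ : Equiv.Perm (Fin n), ∀ a b, q a b → a ≠ b → σ a < σ b := by
  classical
  haveI := hq
  obtain ⟨s, hs, hqs⟩ := extend_partialOrder q
  haveI := hs
  rcases Nat.eq_zero_or_pos n with h0 | hn
  · exact ⟨1, fun a b _ _ => absurd a.2 (by omega)⟩
  set f : Fin n → ℕ := fun x => {y : Fin n | s y x ∧ y ≠ x}.ncard with hf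
  have hmono : ∀ a b : Fin n, s a b → a ≠ b → f a < f b := by
    intro a b hab hne
    apply Set.ncard_lt_ncard _ (Set.toFinite _)
    constructor
    · intro z hz
      refine ⟨IsTrans.trans z a b hz.1 hab, ?_⟩
      rintro rfl
      exact hne (Std.Antisymm.antisymm _ _ hab hz.1)
    · intro hsub
      have ha : a ∈ {y : Fin n | s y b ∧ y ≠ b} := ⟨hab, hne⟩
      exact (hsub ha).2 rfl
  have hlt : ∀ x : Fin n, f x < n := by
    intro x
    have : {y : Fin n | s y x ∧ y ≠ x} ⊂ Set.univ := by
      constructor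
      · exact Set.subset_univ _
      · intro hsub
        exact (hsub (Set.mem_univ x)).2 rfl
    have := Set.ncard_lt_ncard this (Set.toFinite _)
    simpa [Set.ncard_univ] using this
  set g : Fin n → Fin n := fun x => ⟨f x, hlt x⟩ with hg
  have hinj : Function.Injective g := by
    intro a b hab
    by_contra hne
    rcases Std.Total.total (r := s) a b with h | h
    · exact absurd (congrArg Fin.val hab) (Nat.ne_of_lt (hmono a b h hne))
    · exact absurd (congrArg Fin.val hab).symm (Nat.ne_of_lt (hmono b a h (Ne.symm hne)))
  have hbij : Function.Bijective g := (Finite.injective_iff_bijective).mp hinj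
  refine ⟨Equiv.ofBijective g hbij, fun a b hab hne => ?_⟩
  simpa [Equiv.ofBijective, hg, Fin.lt_iff_val_lt_val] using hmono a b (hqs a b hab) hne

end Aux

/-- For any 2-admissible restriction graph `G` on `[n]` there are two permutations
satisfying `G` whose ℓ∞-distance equals `max_i (n - |R(i)| - |R⁻¹(i)| - 1)`. -/
theorem stmt4 {n : ℕ} (E : Fin n → Fin n → Prop)
    (h2 : ∃ σ ρ : Equiv.Perm (Fin n), σ ≠ ρ ∧
      (∀ u v, E u v → σ v < σ u) ∧ (∀ u v, E u v → ρ v < ρ u)) :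
    ∃ σ ρ : Equiv.Perm (Fin n),
      (∀ u v, E u v → σ v < σ u) ∧ (∀ u v, E u v → ρ v < ρ u) ∧
      (Finset.univ.sup fun i : Fin n => ((σ i : ℤ) - (ρ i : ℤ)).natAbs) =
        Finset.univ.sup fun i : Fin n =>
          n - Set.ncard {u : Fin n | u ≠ i ∧ Relation.TransGen E i u}
            - Set.ncard {u : Fin n | u ≠ i ∧ Relation.TransGen E u i} - 1 := by
  classical
  obtain ⟨σ₀, ρ₀, hne, hσ₀, _⟩ := h2
  have hn : 0 < n := by
    rcases Nat.eq_zero_or_pos n with h0 | h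
    · subst h0
      exact absurd (by ext x; exact x.elim0 : σ₀ = ρ₀) hne
    · exact h
  -- reachability facts
  have hreach : ∀ (τ : Equiv.Perm (Fin n)), (∀ u v, E u v → τ v < τ u) →
      ∀ a b, Relation.TransGen E a b → τ b < τ a := by
    intro τ hτ a b h
    induction h with
    | single h => exact hτ _ _ h
    | tail _ h2 ih => exact lt_trans (hτ _ _ h2) ih
  have hirr : ∀ a : Fin n, ¬ Relation.TransGen E a a :=
    fun a h => lt_irrefl _ (hreach σ₀ hσ₀ a a h)
  -- base partial order: `q a b` means `a` below `b`
  set q : Fin n → Fin n → Prop := fun a b => a = b ∨ Relation.TransGen E b a with hqdef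
  have hqtrans : ∀ a b c, q a b → q b c → q a c := by
    rintro a b c (rfl | h1) h2
    · exact h2
    · rcases h2 with rfl | h2
      · exact Or.inr h1
      · exact Or.inr (h2.trans h1)
  have hqantisymm : ∀ a b, q a b → q b a → a = b := by
    rintro a b (rfl | h1) h2
    · rfl
    · rcases h2 with rfl | h2
      · rfl
      · exact absurd (h1.trans h2) (hirr b)
  have hq : IsPartialOrder (Fin n) q :=
    { refl := fun a => Or.inl rfl
      trans := hqtrans
      antisymm := hqantisymm }
  -- the two modified orders for a fixed vertex i
  -- choose the maximizing vertex
  obtain ⟨i, -, hieq⟩ := Finset.exists_mem_eq_sup Finset.univ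
    ⟨⟨0, hn⟩, Finset.mem_univ _⟩ (fun i : Fin n =>
      n - Set.ncard {u : Fin n | u ≠ i ∧ Relation.TransGen E i u}
        - Set.ncard {u : Fin n | u ≠ i ∧ Relation.TransGen E u i} - 1)
  -- order pushing i up
  set q₁ : Fin n → Fin n → Prop := fun a b => q a b ∨ (¬ q i a ∧ q i b) with hq1def
  have hq1 : IsPartialOrder (Fin n) q₁ := by
    refine { refl := fun a => Or.inl (Or.inl rfl), trans := ?_, antisymm := ?_ }
    · rintro a b c (h1 | ⟨h1, h1'⟩) (h2 | ⟨h2, h2'⟩)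
      · exact Or.inl (hqtrans _ _ _ h1 h2)
      · exact Or.inr ⟨fun h => h2 (hqtrans _ _ _ h h1), h2'⟩
      · exact Or.inr ⟨h1, hqtrans _ _ _ h1' h2⟩
      · exact absurd h1' h2
    · rintro a b (h1 | ⟨h1, h1'⟩) (h2 | ⟨h2, h2'⟩)
      · exact hqantisymm _ _ h1 h2
      · exact absurd (hqtrans _ _ _ h2' h1) h2
      · exact absurd (hqtrans _ _ _ h1' h2) h1
      · exact absurd h1' h2
  -- order pushing i down
  set q₂ : Fin n → Fin n → Prop := fun a b => q a b ∨ (q a i ∧ ¬ q b i) with hq2def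
  have hq2 : IsPartialOrder (Fin n) q₂ := by
    refine { refl := fun a => Or.inl (Or.inl rfl), trans := ?_, antisymm := ?_ }
    · rintro a b c (h1 | ⟨h1, h1'⟩) (h2 | ⟨h2, h2'⟩)
      · exact Or.inl (hqtrans _ _ _ h1 h2)
      · exact Or.inr ⟨hqtrans _ _ _ h1 h2, h2'⟩
      · exact Or.inr ⟨h1, fun h => h1' (hqtrans _ _ _ h2 h)⟩
      · exact absurd h2 h1'
    · rintro a b (h1 | ⟨h1, h1'⟩) (h2 | ⟨h2, h2'⟩)
      · exact hqantisymm _ _ h1 h2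
      · exact absurd (hqtrans _ _ _ h1 h2) h2'
      · exact absurd (hqtrans _ _ _ h2 h1) h1'
      · exact absurd h2 h1'
  obtain ⟨σ, hσ⟩ := exists_perm_ext q₁ hq1
  obtain ⟨ρ, hρ⟩ := exists_perm_ext q₂ hq2
  -- both satisfy E
  have hEne : ∀ u v, E u v → v ≠ u := by
    rintro u v h rfl
    exact hirr _ (Relation.TransGen.single h)
  have hσE : ∀ u v, E u v → σ v < σ u :=
    fun u v h => hσ v u (Or.inl (Or.inr (Relation.TransGen.single h))) (hEne u v h)
  have hρE : ∀ u v, E u v → ρ v < ρ u :=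
    fun u v h => hρ v u (Or.inl (Or.inr (Relation.TransGen.single h))) (hEne u v h)
  refine ⟨σ, ρ, hσE, hρE, ?_⟩
  -- abbreviations
  set R : Fin n → Set (Fin n) := fun j => {u : Fin n | u ≠ j ∧ Relation.TransGen E j u} with hR
  set Rinv : Fin n → Set (Fin n) := fun j => {u : Fin n | u ≠ j ∧ Relation.TransGen E u j} with hRinv
  -- general bounds for any extension τ
  have hbound : ∀ (τ : Equiv.Perm (Fin n)), (∀ u v, E u v → τ v < τ u) → ∀ j : Fin n,
      (R j).ncard ≤ (τ j : ℕ) ∧ (Rinv j).ncard ≤ n - 1 - (τ j : ℕ) := by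
    intro τ hτ j
    constructor
    · rw [← perm_below_ncard τ j]
      exact Set.ncard_le_ncard (fun u hu => hreach τ hτ j u hu.2) (Set.toFinite _)
    · rw [← perm_above_ncard τ j]
      exact Set.ncard_le_ncard (fun u hu => hreach τ hτ u j hu.2) (Set.toFinite _)
  -- exact values at i
  have hσi : {u : Fin n | σ i < σ u} = Rinv i := by
    ext u
    constructor
    · intro hu
      simp only [Set.mem_setOf_eq] at hu
      have hune : u ≠ i := by rintro rfl; exact lt_irrefl _ hu
      refine ⟨hune, ?_⟩
      by_contra hT
      have hqiu : ¬ q i u := by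
        rintro (h | h)
        · exact hune h.symm
        · exact hT h
      have := hσ u i (Or.inr ⟨hqiu, Or.inl rfl⟩) hune
      exact absurd hu (not_lt_of_gt this)
    · rintro ⟨hune, hT⟩
      exact hσ i u (Or.inl (Or.inr hT)) (Ne.symm hune)
  have hρi : {u : Fin n | ρ u < ρ i} = R i := by
    ext u
    constructor
    · intro hu
      simp only [Set.mem_setOf_eq] at hu
      have hune : u ≠ i := by rintro rfl; exact lt_irrefl _ hu
      refine ⟨hune, ?_⟩
      by_contra hT
      have hqui : ¬ q u i := by
        rintro (h | h)
        · exact hune h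
        · exact hT h
      have := hρ i u (Or.inr ⟨Or.inl rfl, hqui⟩) (Ne.symm hune)
      exact absurd hu (not_lt_of_gt this)
    · rintro ⟨hune, hT⟩
      exact hρ u i (Or.inl (Or.inr hT)) hune
  have hσival : (Rinv i).ncard = n - 1 - (σ i : ℕ) := by
    rw [← hσi, perm_above_ncard]
  have hρival : (R i).ncard = (ρ i : ℕ) := by
    rw [← hρi, perm_below_ncard]
  -- final sup computation
  apply le_antisymm
  · apply Finset.sup_le
    intro j _
    have h1 := hbound σ hσE j
    have h2 := hbound ρ hρE j
    have hjn : (σ j : ℕ) ≤ n - 1 := by have := (σ j).2; omega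
    have hjn' : (ρ j : ℕ) ≤ n - 1 := by have := (ρ j).2; omega
    have hle : ((σ j : ℤ) - (ρ j : ℤ)).natAbs ≤
        n - (R j).ncard - (Rinv j).ncard - 1 := by omega
    exact le_trans hle (Finset.le_sup (f := fun i : Fin n =>
      n - (R i).ncard - (Rinv i).ncard - 1) (Finset.mem_univ j))
  · rw [hieq]
    have h1 := hbound σ hσE i
    have hin : (σ i : ℕ) ≤ n - 1 := by have := (σ i).2; omega
    have hkey : (n - (R i).ncard - (Rinv i).ncard - 1 : ℕ) =
        ((σ i : ℤ) - (ρ i : ℤ)).natAbs := by omega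
    calc (n - (R i).ncard - (Rinv i).ncard - 1 : ℕ)
        = ((σ i : ℤ) - (ρ i : ℤ)).natAbs := hkey
      _ ≤ _ := Finset.le_sup (f := fun i : Fin n => ((σ i : ℤ) - (ρ i : ℤ)).natAbs) (Finset.mem_univ i)
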